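/- arXiv:1409.4338 — 4 statements merged into one kernel-verified Lean document; each statement's English description precedes it below -/
import Mathlib

section
/- For a product state ρ^{A} ⊗ σ^{B} of normalized states, the conditional min-entropy satisfies H_min(A|B)_{ρ⊗σ} = H_min(A)_ρ = -log ‖ρ^A‖_∞, where ‖·‖_∞ denotes the operator norm (largest eigenvalue). -/
open Matrix ComplexOrder Kronecker

/-- Conditional min-entropy `H_min(A|B)_ρ := - inf_σ D_max(ρ^{AB} ‖ I^A ⊗ σ^B)`, where the
infimum ranges over normalized states `σ` on `B` and
`D_max(ρ‖τ) := inf {λ ∈ ℝ : 2^λ τ ≥ ρ}` (Loewner order). -/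
noncomputable def HminCond {a b : Type*} [Fintype a] [Fintype b] [DecidableEq a] [DecidableEq b]
    (ρ : Matrix (a × b) (a × b) ℂ) : ℝ :=
  - sInf {lam : ℝ | ∃ σ : Matrix b b ℂ, σ.PosSemidef ∧ σ.trace = 1 ∧
      ((((2 : ℝ) ^ lam : ℝ) : ℂ) • ((1 : Matrix a a ℂ) ⊗ₖ σ) - ρ).PosSemidef}

section Aux

variable {a b : Type*} [Fintype a] [Fintype b]

lemma kron_conjTranspose (A : Matrix a a ℂ) (B : Matrix b b ℂ) :
    (A ⊗ₖ B)ᴴ = Aᴴ ⊗ₖ Bᴴ := by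
  ext ⟨i, j⟩ ⟨k, l⟩
  simp [conjTranspose_apply, kroneckerMap_apply, mul_comm]

lemma kron_posSemidef {A : Matrix a a ℂ} {B : Matrix b b ℂ}
    (hA : A.PosSemidef) (hB : B.PosSemidef) : (A ⊗ₖ B).PosSemidef := by
  exact hA.kronecker hB

lemma kron_quadform (M : Matrix a a ℂ) (N : Matrix b b ℂ) (v : a → ℂ) (w : b → ℂ) :
    star (fun p : a × b => v p.1 * w p.2) ⬝ᵥ ((M ⊗ₖ N) *ᵥ fun p : a × b => v p.1 * w p.2)
      = (star v ⬝ᵥ (M *ᵥ v)) * (star w ⬝ᵥ (N *ᵥ w)) := by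
  have key : ∀ (i : a) (j : b),
      (∑ k, ∑ l, M i k * N j l * (v k * w l)) = (∑ k, M i k * v k) * (∑ l, N j l * w l) := by
    intro i j
    rw [Fintype.sum_mul_sum]
    exact Finset.sum_congr rfl fun k _ => Finset.sum_congr rfl fun l _ => by ring
  simp only [dotProduct, mulVec, kroneckerMap_apply, Pi.star_apply, star_mul',
    Fintype.sum_prod_type]
  rw [Fintype.sum_mul_sum]
  refine Finset.sum_congr rfl fun i _ => Finset.sum_congr rfl fun j _ => ?_
  rw [key]
  ring

lemma trace_eq_sum_eig [DecidableEq a] {A : Matrix a a ℂ} (hA : A.IsHermitian) :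
    A.trace = ∑ i, (hA.eigenvalues i : ℂ) := by
  conv_lhs => rw [hA.spectral_theorem, Unitary.conjStarAlgAut_apply]
  rw [trace_mul_cycle]
  rw [show (star (hA.eigenvectorUnitary : Matrix a a ℂ)) * (hA.eigenvectorUnitary : Matrix a a ℂ)
      = 1 from (Matrix.mem_unitaryGroup_iff').mp (hA.eigenvectorUnitary).2]
  simp [trace_diagonal]

end Aux

/-- For a product state `ρ^A ⊗ σ^B`, the conditional min-entropy equals the (unconditional)
min-entropy `H_min(A)_ρ = - log ‖ρ^A‖_∞`, minus log of the largest eigenvalue of `ρ^A`. -/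
theorem HminCond_kronecker {a b : Type*} [Fintype a] [Fintype b] [DecidableEq a] [DecidableEq b]
    (ρ : Matrix a a ℂ) (σ : Matrix b b ℂ)
    (hρ : ρ.PosSemidef) (hρ1 : ρ.trace = 1) (hσ : σ.PosSemidef) (hσ1 : σ.trace = 1) :
    HminCond (ρ ⊗ₖ σ) = - Real.logb 2 (⨆ i, hρ.1.eigenvalues i) := by
  haveI : Nonempty a := by
    by_contra h
    rw [not_nonempty_iff] at h
    rw [Matrix.trace] at hρ1
    simp at hρ1
  set eig : a → ℝ := hρ.1.eigenvalues with heig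
  set L : ℝ := ⨆ i, eig i with hLdef
  have hsumC : ∑ i, (eig i : ℂ) = 1 := by rw [← trace_eq_sum_eig hρ.1, hρ1]
  have hsum : ∑ i, eig i = 1 := by exact_mod_cast (by push_cast; exact hsumC :
    ((∑ i, eig i : ℝ) : ℂ) = ((1 : ℝ) : ℂ))
  have hbdd : BddAbove (Set.range eig) := Set.Finite.bddAbove (Set.finite_range _)
  have hle : ∀ i, eig i ≤ L := fun i => le_ciSup hbdd i
  have hLpos : 0 < L := by
    by_contra h
    push_neg at h
    have : (1 : ℝ) ≤ 0 := hsum ▸ Finset.sum_nonpos fun i _ => (hle i).trans h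
    linarith
  -- the spectral gap matrix
  set U : Matrix a a ℂ := (hρ.1.eigenvectorUnitary : Matrix a a ℂ) with hUdef
  have hUU : U * star U = 1 := (Matrix.mem_unitaryGroup_iff).mp (hρ.1.eigenvectorUnitary).2
  have hgap : ((L : ℂ) • (1 : Matrix a a ℂ) - ρ).PosSemidef := by
    have hdiag : (L : ℂ) • (1 : Matrix a a ℂ) - ρ
        = U * diagonal (fun i => ((L - eig i : ℝ) : ℂ)) * star U := by
      have h1 : (L : ℂ) • (1 : Matrix a a ℂ) = U * ((L : ℂ) • 1) * star U := by
        rw [Matrix.mul_smul, Matrix.smul_mul, mul_one, hUU]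
      conv_lhs => rw [hρ.1.spectral_theorem, Unitary.conjStarAlgAut_apply, h1]
      rw [← Matrix.sub_mul, ← Matrix.mul_sub]
      congr 2
      rw [Matrix.smul_one_eq_diagonal, diagonal_sub]
      ext i
      push_cast
      rfl
    rw [hdiag]
    exact (posSemidef_diagonal_iff.mpr fun i =>
      Complex.zero_le_real.mpr (sub_nonneg.mpr (hle i))).mul_mul_conjTranspose_same U
  -- membership of logb 2 L in the defining set
  set S : Set ℝ := {lam : ℝ | ∃ σ' : Matrix b b ℂ, σ'.PosSemidef ∧ σ'.trace = 1 ∧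
      ((((2 : ℝ) ^ lam : ℝ) : ℂ) • ((1 : Matrix a a ℂ) ⊗ₖ σ') - ρ ⊗ₖ σ).PosSemidef} with hSdef
  have hmem : Real.logb 2 L ∈ S := by
    refine ⟨σ, hσ, hσ1, ?_⟩
    have h2 : ((2 : ℝ) ^ Real.logb 2 L : ℝ) = L :=
      Real.rpow_logb (by norm_num) (by norm_num) hLpos
    rw [h2]
    have key : (L : ℂ) • ((1 : Matrix a a ℂ) ⊗ₖ σ) - ρ ⊗ₖ σ
        = ((L : ℂ) • (1 : Matrix a a ℂ) - ρ) ⊗ₖ σ := by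
      rw [← Matrix.smul_kronecker]
      ext ⟨i, j⟩ ⟨k, l⟩
      simp [kroneckerMap_apply, sub_mul]
    rw [key]
    exact kron_posSemidef hgap hσ
  -- lower bound
  obtain ⟨i0, hi0⟩ := Finite.exists_max eig
  have hLeq : L = eig i0 := le_antisymm (ciSup_le hi0) (hle i0)
  have hlb : ∀ lam ∈ S, Real.logb 2 L ≤ lam := by
    rintro lam ⟨σ', hσ', hσ'1, hpsd⟩
    set c : ℂ := (((2 : ℝ) ^ lam : ℝ) : ℂ) with hcdef
    set v : a → ℂ := ⇑(hρ.1.eigenvectorBasis i0) with hvdef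
    have hvv : star v ⬝ᵥ v = 1 := by
      have h1 : ‖hρ.1.eigenvectorBasis i0‖ = 1 := hρ.1.eigenvectorBasis.orthonormal.1 i0
      have h2 := inner_self_eq_norm_sq_to_K (𝕜 := ℂ) (hρ.1.eigenvectorBasis i0)
      rw [EuclideanSpace.inner_eq_star_dotProduct, h1] at h2
      rw [dotProduct_comm]
      simpa using h2
    have hrv : ρ *ᵥ v = (eig i0 : ℂ) • v := by
      have := hρ.1.mulVec_eigenvectorBasis i0
      rw [this]
      ext k
      simp [hvdef]
      left; rfl
    have hpt : ∀ j : b, 0 ≤ c * σ' j j - (L : ℂ) * σ j j := by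
      intro j
      set w : b → ℂ := Pi.single j (1 : ℂ) with hwdef
      have hps : star w = w := by
        ext k
        by_cases hk : k = j <;> simp [hwdef, Pi.single_apply, hk]
      have h := hpsd.dotProduct_mulVec_nonneg (fun p : a × b => v p.1 * w p.2)
      rw [Matrix.sub_mulVec, dotProduct_sub, Matrix.smul_mulVec, dotProduct_smul,
        kron_quadform, kron_quadform, hps, one_mulVec, hvv, hrv] at h
      rw [Matrix.mulVec_single, single_dotProduct] at h
      rw [Matrix.mulVec_single, single_dotProduct] at h
      simp only [dotProduct_smul, hvv, smul_eq_mul, mul_one, one_mul] at h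
      rw [← hLeq] at h
      convert h using 2 <;> simp
    have hsumle : (L : ℂ) ≤ c := by
      have h := Finset.sum_nonneg (fun j (_ : j ∈ Finset.univ) => hpt j)
      rw [Finset.sum_sub_distrib, ← Finset.mul_sum, ← Finset.mul_sum] at h
      rw [show (∑ j, σ' j j) = σ'.trace from rfl, show (∑ j, σ j j) = σ.trace from rfl,
        hσ'1, hσ1, mul_one, mul_one] at h
      exact sub_nonneg.mp h
    have hreal : L ≤ (2 : ℝ) ^ lam := by
      rw [hcdef] at hsumle
      exact_mod_cast hsumle
    calc Real.logb 2 L ≤ Real.logb 2 ((2 : ℝ) ^ lam) :=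
          Real.logb_le_logb_of_le (by norm_num) hLpos hreal
      _ = lam := Real.logb_rpow (by norm_num) (by norm_num)
  have : sInf S = Real.logb 2 L := le_antisymm
    (csInf_le ⟨Real.logb 2 L, fun x hx => hlb x hx⟩ hmem)
    (le_csInf ⟨_, hmem⟩ hlb)
  rw [HminCond, ← hSdef, this]
end

section
/- Unlockability of conditional min-entropy (non-smooth case): for any normalized state ρ^{ABC} on A ⊗ B ⊗ C, H_min(A|B)_ρ ≤ H_min(A|BC)_ρ + 2 log|C|. -/
open Matrix ComplexOrder Kronecker

namespace HminUnlock

set_option linter.unusedSectionVars false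

variable {ι κ : Type*} [Fintype ι] [Fintype κ]

noncomputable def qf (M : Matrix ι ι ℂ) (x y : ι → ℂ) : ℂ := star x ⬝ᵥ M *ᵥ y

lemma qf_nonneg {M : Matrix ι ι ℂ} (hM : M.PosSemidef) (x : ι → ℂ) : 0 ≤ qf M x x := hM.dotProduct_mulVec_nonneg x

lemma sum_dotProduct' (f : κ → ι → ℂ) (w : ι → ℂ) :
    (∑ k, f k) ⬝ᵥ w = ∑ k, f k ⬝ᵥ w := by
  simp only [dotProduct, Finset.sum_apply, Finset.sum_mul]
  exact Finset.sum_comm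

lemma dotProduct_sum' (w : ι → ℂ) (f : κ → ι → ℂ) :
    w ⬝ᵥ (∑ k, f k) = ∑ k, w ⬝ᵥ f k := by
  simp only [dotProduct, Finset.sum_apply, Finset.mul_sum]
  exact Finset.sum_comm

lemma mulVec_sum' (M : Matrix ι ι ℂ) (f : κ → ι → ℂ) :
    M *ᵥ (∑ k, f k) = ∑ k, M *ᵥ f k := by
  funext i
  rw [Finset.sum_apply]
  exact dotProduct_sum' _ _

lemma qf_sum_sum (M : Matrix ι ι ℂ) (v w : κ → ι → ℂ) :
    qf M (∑ k, v k) (∑ k, w k) = ∑ k, ∑ l, qf M (v k) (w l) := by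
  unfold qf
  rw [star_sum, sum_dotProduct']
  refine Finset.sum_congr rfl fun k _ => ?_
  rw [mulVec_sum', dotProduct_sum']

lemma qf_sub (M : Matrix ι ι ℂ) (x y : ι → ℂ) :
    qf M (x - y) (x - y) = qf M x x - qf M x y - qf M y x + qf M y y := by
  unfold qf
  rw [star_sub, mulVec_sub, sub_dotProduct, dotProduct_sub, dotProduct_sub]
  ring

/-- Cauchy–Schwarz-type inequality for the PSD sesquilinear form. -/
lemma qf_cs {M : Matrix ι ι ℂ} (hM : M.PosSemidef) (v : κ → ι → ℂ) :
    qf M (∑ k, v k) (∑ k, v k) ≤ (Fintype.card κ : ℂ) * ∑ k, qf M (v k) (v k) := by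
  have swap : ∑ k : κ, ∑ l : κ, qf M (v l) (v k) = ∑ k : κ, ∑ l : κ, qf M (v k) (v l) :=
    Finset.sum_comm
  have key : ∑ k : κ, ∑ l : κ, qf M (v k - v l) (v k - v l)
      = 2 * ((Fintype.card κ : ℂ) * ∑ k, qf M (v k) (v k) - ∑ k, ∑ l, qf M (v k) (v l)) := by
    simp only [qf_sub, Finset.sum_add_distrib, Finset.sum_sub_distrib, Finset.sum_const,
      Finset.card_univ, nsmul_eq_mul, ← Finset.mul_sum]
    linear_combination - swap
  have h1 : (0:ℂ) ≤ ∑ k : κ, ∑ l : κ, qf M (v k - v l) (v k - v l) :=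
    Finset.sum_nonneg fun k _ => Finset.sum_nonneg fun l _ => qf_nonneg hM _
  rw [key] at h1
  have h2 : (0:ℂ) ≤ (Fintype.card κ : ℂ) * ∑ k, qf M (v k) (v k) - ∑ k, ∑ l, qf M (v k) (v l) := by
    rw [Complex.le_def] at h1 ⊢
    constructor
    · have := h1.1; simp [Complex.mul_re] at this ⊢; linarith
    · have := h1.2; simp [Complex.mul_im] at this ⊢; linarith
  rw [qf_sum_sum]
  exact sub_nonneg.mp h2

section TensPtr
variable [DecidableEq κ]

/-- `M ⊗ 1` on `ι × κ`. -/
noncomputable def tensId (M : Matrix ι ι ℂ) : Matrix (ι × κ) (ι × κ) ℂ :=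
  Matrix.of fun p q => if p.2 = q.2 then M p.1 q.1 else 0

lemma tensId_form (M : Matrix ι ι ℂ) (z : ι × κ → ℂ) :
    qf (tensId M) z z = ∑ k : κ, qf M (fun i => z (i, k)) (fun i => z (i, k)) := by
  unfold qf tensId
  simp only [dotProduct, mulVec, of_apply, Fintype.sum_prod_type, Pi.star_apply,
    ite_mul, zero_mul, mul_ite, mul_zero, Finset.sum_ite_eq, Finset.sum_ite_eq',
    Finset.mem_univ, if_true]
  rw [Finset.sum_comm]

lemma tensId_isHermitian {M : Matrix ι ι ℂ} (hM : M.IsHermitian) :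
    (tensId M : Matrix (ι × κ) (ι × κ) ℂ).IsHermitian := by
  ext p q
  simp only [conjTranspose_apply, tensId, of_apply, apply_ite star, star_zero]
  rcases eq_or_ne p.2 q.2 with h | h
  · rw [if_pos h.symm, if_pos h, hM.apply]
  · rw [if_neg (Ne.symm h), if_neg h]

lemma tensId_psd {M : Matrix ι ι ℂ} (hM : M.PosSemidef) :
    (tensId M : Matrix (ι × κ) (ι × κ) ℂ).PosSemidef := by
  refine .of_dotProduct_mulVec_nonneg (tensId_isHermitian hM.1) fun z => ?_
  have := tensId_form (κ := κ) M z
  unfold qf at this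
  rw [this]
  exact Finset.sum_nonneg fun k _ => hM.dotProduct_mulVec_nonneg _

/-- partial trace over the second factor -/
noncomputable def ptr (N : Matrix (ι × κ) (ι × κ) ℂ) : Matrix ι ι ℂ :=
  Matrix.of fun p q => ∑ k : κ, N (p, k) (q, k)

lemma ptr_form (N : Matrix (ι × κ) (ι × κ) ℂ) (y : ι → ℂ) :
    qf (ptr N) y y = ∑ m : κ, qf N (fun p => if p.2 = m then y p.1 else 0)
      (fun p => if p.2 = m then y p.1 else 0) := by
  unfold qf ptr
  simp only [dotProduct, mulVec, of_apply, Fintype.sum_prod_type, Pi.star_apply,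
    apply_ite (star : ℂ → ℂ), star_zero, ite_mul, zero_mul, mul_ite, mul_zero,
    Finset.sum_ite_eq, Finset.sum_ite_eq', Finset.mem_univ, if_true,
    Finset.sum_mul, Finset.mul_sum, Finset.sum_ite_irrel, Finset.sum_const_zero]
  exact (Finset.sum_congr rfl fun x _ => Finset.sum_comm).trans Finset.sum_comm

lemma ptr_isHermitian {N : Matrix (ι × κ) (ι × κ) ℂ} (hN : N.IsHermitian) :
    (ptr N).IsHermitian := by
  ext p q
  simp only [conjTranspose_apply, ptr, of_apply, star_sum]
  exact Finset.sum_congr rfl fun k _ => hN.apply _ _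

lemma ptr_psd {N : Matrix (ι × κ) (ι × κ) ℂ} (hN : N.PosSemidef) : (ptr N).PosSemidef := by
  refine .of_dotProduct_mulVec_nonneg (ptr_isHermitian hN.1) fun y => ?_
  have := ptr_form N y
  unfold qf at this
  rw [this]
  exact Finset.sum_nonneg fun m _ => hN.dotProduct_mulVec_nonneg _

lemma ptr_trace (N : Matrix (ι × κ) (ι × κ) ℂ) : (ptr N).trace = N.trace := by
  simp [Matrix.trace, ptr, Matrix.diag, Fintype.sum_prod_type]

end TensPtr

lemma qf_submatrix {κ' : Type*} [Fintype κ'] (N : Matrix ι ι ℂ) (e : κ' ≃ ι) (x y : κ' → ℂ) :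
    qf (N.submatrix e e) x y = qf N (fun i => x (e.symm i)) (fun i => y (e.symm i)) := by
  unfold qf
  rw [show (e : κ' → ι) = (e : κ' ≃ ι) from rfl]
  rw [submatrix_mulVec_equiv]
  simp only [dotProduct, Pi.star_apply, Function.comp]
  rw [← Equiv.sum_comp e (fun i => star (x (e.symm i)) * (N *ᵥ fun i => y (e.symm i)) i)]
  simp only [Equiv.symm_apply_apply]
  rfl

lemma psd_smul {M : Matrix ι ι ℂ} (hM : M.PosSemidef) {r : ℝ} (hr : 0 ≤ r) :
    (((r : ℂ)) • M).PosSemidef := by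
  refine .of_dotProduct_mulVec_nonneg ?_ fun x => ?_
  · unfold Matrix.IsHermitian
    rw [conjTranspose_smul, hM.1.eq]
    simp
  · rw [smul_mulVec, dotProduct_smul, smul_eq_mul]
    exact mul_nonneg (by exact_mod_cast Complex.zero_le_real.mpr hr) (hM.dotProduct_mulVec_nonneg x)

lemma psd_natsmul {M : Matrix ι ι ℂ} (hM : M.PosSemidef) (n : ℕ) :
    (((n : ℂ)) • M).PosSemidef := by
  have := psd_smul hM (r := (n : ℝ)) (Nat.cast_nonneg n)
  simpa using this

lemma psd_trace_nonneg {M : Matrix ι ι ℂ} [DecidableEq ι] (hM : M.PosSemidef) : 0 ≤ M.trace := by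
  refine Finset.sum_nonneg fun i _ => ?_
  have h := hM.dotProduct_mulVec_nonneg (Pi.single i 1)
  simpa [dotProduct, mulVec, Pi.single_apply, Finset.sum_ite_eq, Finset.sum_ite_eq'] using h

end HminUnlock

/-- The marginal `ρ^{AB}` of a state on `A ⊗ (B ⊗ C)`, obtained by partial trace over `C`. -/
noncomputable def margAB {a b c : Type*} [Fintype a] [Fintype b] [Fintype c]
    (ρ : Matrix (a × b × c) (a × b × c) ℂ) : Matrix (a × b) (a × b) ℂ :=
  Matrix.of fun p q => ∑ k : c, ρ (p.1, p.2, k) (q.1, q.2, k)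

namespace HminUnlock

section Concrete
variable {a b c : Type*} [Fintype a] [Fintype b] [Fintype c]
  [DecidableEq a] [DecidableEq b] [DecidableEq c]

noncomputable def EE (M : Matrix (a × b) (a × b) ℂ) : Matrix (a × b × c) (a × b × c) ℂ :=
  (tensId M).submatrix (Equiv.prodAssoc a b c).symm (Equiv.prodAssoc a b c).symm

lemma margAB_eq_ptr (ρ : Matrix (a × b × c) (a × b × c) ℂ) :
    margAB ρ = ptr (ρ.submatrix (Equiv.prodAssoc a b c) (Equiv.prodAssoc a b c)) := rfl

lemma margAB_psd {ρ : Matrix (a × b × c) (a × b × c) ℂ} (hρ : ρ.PosSemidef) :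
    (margAB ρ).PosSemidef := by
  rw [margAB_eq_ptr]
  exact ptr_psd (hρ.submatrix _)

lemma EE_psd {M : Matrix (a × b) (a × b) ℂ} (hM : M.PosSemidef) :
    (EE M : Matrix (a × b × c) (a × b × c) ℂ).PosSemidef :=
  ((tensId_psd hM).submatrix _)

lemma EE_sub (M N : Matrix (a × b) (a × b) ℂ) :
    (EE (M - N) : Matrix (a × b × c) (a × b × c) ℂ) = EE M - EE N := by
  ext p q
  simp only [EE, tensId, submatrix_apply, of_apply, Matrix.sub_apply]
  split_ifs <;> simp

lemma EE_smul (r : ℂ) (M : Matrix (a × b) (a × b) ℂ) :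
    (EE (r • M) : Matrix (a × b × c) (a × b × c) ℂ) = r • EE M := by
  ext p q
  simp only [EE, tensId, submatrix_apply, of_apply, Matrix.smul_apply, smul_eq_mul]
  split_ifs <;> simp

/-- The key operator inequality `|C| ρ^{AB} ⊗ I ≥ ρ`. -/
lemma key_psd (ρ : Matrix (a × b × c) (a × b × c) ℂ) (hρ : ρ.PosSemidef) :
    ((Fintype.card c : ℂ) • EE (margAB ρ) - ρ).PosSemidef := by
  have hmps : (margAB ρ).PosSemidef := margAB_psd hρ
  refine .of_dotProduct_mulVec_nonneg ?_ fun x => ?_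
  · have h1 : (EE (margAB ρ) : Matrix (a × b × c) (a × b × c) ℂ).IsHermitian := (EE_psd hmps).1
    unfold Matrix.IsHermitian
    rw [conjTranspose_sub, conjTranspose_smul, hρ.1.eq, h1.eq]
    simp
  · set v : c → c → (a × b × c → ℂ) :=
      fun l m p => if p.2.2 = m then x (p.1, p.2.1, l) else 0 with hv
    have hEform : star x ⬝ᵥ (EE (margAB ρ) : Matrix (a × b × c) (a × b × c) ℂ) *ᵥ x
        = ∑ l : c, ∑ m : c, qf ρ (v l m) (v l m) := by
      have h1 : qf (EE (margAB ρ)) x x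
          = qf (tensId (margAB ρ)) (fun r => x ((Equiv.prodAssoc a b c).symm.symm r))
              (fun r => x ((Equiv.prodAssoc a b c).symm.symm r)) :=
        qf_submatrix _ _ _ _
      simp only [Equiv.symm_symm] at h1
      have h2 : star x ⬝ᵥ (EE (margAB ρ) : Matrix (a × b × c) (a × b × c) ℂ) *ᵥ x
          = qf (EE (margAB ρ)) x x := rfl
      rw [h2, h1, tensId_form]
      refine Finset.sum_congr rfl fun l _ => ?_
      rw [margAB_eq_ptr, ptr_form]
      refine Finset.sum_congr rfl fun m _ => ?_
      rw [qf_submatrix]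
      rfl
    have hx : x = ∑ k : c, v k k := by
      funext p
      rw [Finset.sum_apply]
      simp only [hv]
      rw [Finset.sum_ite_eq (Finset.univ : Finset c) p.2.2 (fun k => x (p.1, p.2.1, k))]
      simp
    have hccs : qf ρ x x ≤ (Fintype.card c : ℂ) * ∑ k : c, qf ρ (v k k) (v k k) := by
      conv_lhs => rw [hx]
      exact qf_cs hρ _
    have hmono : ∑ k : c, qf ρ (v k k) (v k k) ≤ ∑ l : c, ∑ m : c, qf ρ (v l m) (v l m) :=
      Finset.sum_le_sum fun l _ =>
        Finset.single_le_sum (f := fun m => qf ρ (v l m) (v l m))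
          (fun m _ => qf_nonneg hρ _) (Finset.mem_univ l)
    have hn : (0:ℂ) ≤ (Fintype.card c : ℂ) := by
      have : (0:ℂ) ≤ ((Fintype.card c : ℝ) : ℂ) :=
        Complex.zero_le_real.mpr (Nat.cast_nonneg _)
      simpa using this
    rw [sub_mulVec, dotProduct_sub, smul_mulVec, dotProduct_smul, smul_eq_mul, hEform]
    exact sub_nonneg.mpr (le_trans hccs (mul_le_mul_of_nonneg_left hmono hn))

lemma kron_eq (σ : Matrix b b ℂ) (r s : ℂ) :
    (r • ((1 : Matrix a a ℂ) ⊗ₖ (σ ⊗ₖ (s • (1 : Matrix c c ℂ)))) : Matrix (a × b × c) (a × b × c) ℂ)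
      = (r * s) • (EE ((1 : Matrix a a ℂ) ⊗ₖ σ) : Matrix (a × b × c) (a × b × c) ℂ) := by
  ext ⟨i, j, l⟩ ⟨i', j', l'⟩
  simp only [EE, tensId, Matrix.smul_apply, submatrix_apply, of_apply, kroneckerMap_apply,
    Matrix.one_apply, Equiv.prodAssoc_symm_apply, smul_eq_mul]
  split_ifs <;> ring

lemma kron_smul_one (σ : Matrix b b ℂ) (s : ℂ) :
    (σ ⊗ₖ (s • (1 : Matrix c c ℂ))) = s • (tensId σ : Matrix (b × c) (b × c) ℂ) := by
  ext ⟨j, k⟩ ⟨j', k'⟩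
  simp only [kroneckerMap_apply, tensId, Matrix.smul_apply, of_apply, Matrix.one_apply, smul_eq_mul]
  split_ifs <;> ring

lemma margAB_sub_smul (r : ℂ) (σbc : Matrix (b × c) (b × c) ℂ)
    (ρ : Matrix (a × b × c) (a × b × c) ℂ) :
    margAB (r • ((1 : Matrix a a ℂ) ⊗ₖ σbc) - ρ)
      = r • ((1 : Matrix a a ℂ) ⊗ₖ ptr σbc) - margAB ρ := by
  ext p q
  by_cases h : p.1 = q.1 <;>
    simp [margAB, ptr, kroneckerMap_apply, Matrix.one_apply, h, Finset.sum_sub_distrib,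
      Finset.mul_sum]

end Concrete

end HminUnlock

open HminUnlock in
/-- Unlockability of the conditional min-entropy:
`H_min(A|B)_ρ ≤ H_min(A|BC)_ρ + 2 log |C|`. -/
theorem HminCond_unlock {a b c : Type*} [Fintype a] [Fintype b] [Fintype c]
    [DecidableEq a] [DecidableEq b] [DecidableEq c]
    (ρ : Matrix (a × b × c) (a × b × c) ℂ) (hρ : ρ.PosSemidef) (hρ1 : ρ.trace = 1) :
    HminCond (margAB ρ) ≤ HminCond ρ + 2 * Real.logb 2 (Fintype.card c) := by
  classical
  have hne : Nonempty (a × b × c) := by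
    by_contra h
    rw [not_nonempty_iff] at h
    rw [Matrix.trace, Finset.univ_eq_empty, Finset.sum_empty] at hρ1
    exact zero_ne_one hρ1
  obtain ⟨⟨i0, j0, k0⟩⟩ := hne
  haveI : Nonempty a := ⟨i0⟩
  haveI : Nonempty c := ⟨k0⟩
  have hnpos : 0 < Fintype.card c := Fintype.card_pos
  have hn0 : (0:ℝ) < (Fintype.card c : ℝ) := by exact_mod_cast hnpos
  set S1 : Set ℝ := {lam : ℝ | ∃ σ : Matrix b b ℂ, σ.PosSemidef ∧ σ.trace = 1 ∧
      ((((2 : ℝ) ^ lam : ℝ) : ℂ) • ((1 : Matrix a a ℂ) ⊗ₖ σ) - margAB ρ).PosSemidef} with hS1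
  set S2 : Set ℝ := {lam : ℝ | ∃ σ : Matrix (b × c) (b × c) ℂ, σ.PosSemidef ∧ σ.trace = 1 ∧
      ((((2 : ℝ) ^ lam : ℝ) : ℂ) • ((1 : Matrix a a ℂ) ⊗ₖ σ) - ρ).PosSemidef} with hS2
  have hH1 : HminCond (margAB ρ) = -sInf S1 := rfl
  have hH2 : HminCond ρ = -sInf S2 := rfl
  have hsub : S2 ⊆ S1 := by
    rintro lam ⟨σ, hσ, hσ1, hpsd⟩
    refine ⟨ptr σ, ptr_psd hσ, by rw [ptr_trace, hσ1], ?_⟩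
    rw [← margAB_sub_smul]
    exact margAB_psd hpsd
  have hstep : ∀ lam ∈ S1, lam + 2 * Real.logb 2 (Fintype.card c) ∈ S2 := by
    rintro lam ⟨σ, hσ, hσ1, hpsd⟩
    have hcne : ((Fintype.card c : ℂ)) ≠ 0 := by exact_mod_cast hnpos.ne'
    refine ⟨σ ⊗ₖ (((Fintype.card c : ℂ))⁻¹ • 1), ?_, ?_, ?_⟩
    · rw [kron_smul_one]
      have := psd_smul (tensId_psd hσ (κ := c)) (r := ((Fintype.card c : ℝ))⁻¹) (by positivity)
      have hcast : (((((Fintype.card c : ℝ))⁻¹ : ℝ) : ℂ)) = ((Fintype.card c : ℂ))⁻¹ := by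
        push_cast
        ring
      rwa [hcast] at this
    · rw [trace_kronecker, hσ1, trace_smul, trace_one, smul_eq_mul, one_mul,
        inv_mul_cancel₀ hcne]
    · have h2 : (2:ℝ) ^ (lam + 2 * Real.logb 2 (Fintype.card c))
          = (2:ℝ) ^ lam * ((Fintype.card c : ℝ)) ^ (2:ℕ) := by
        rw [Real.rpow_add (by norm_num), mul_comm (2:ℝ) (Real.logb 2 _),
          Real.rpow_mul (by norm_num), Real.rpow_logb (by norm_num) (by norm_num) hn0,
          Real.rpow_two, sq]
      have hs : ((((2:ℝ) ^ (lam + 2 * Real.logb 2 (Fintype.card c)) : ℝ) : ℂ))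
            * ((Fintype.card c : ℂ))⁻¹
          = (Fintype.card c : ℂ) * (((2:ℝ) ^ lam : ℝ) : ℂ) := by
        rw [h2]
        push_cast
        field_simp
      have hmat : ((((2:ℝ) ^ (lam + 2 * Real.logb 2 (Fintype.card c)) : ℝ) : ℂ))
            • ((1 : Matrix a a ℂ) ⊗ₖ (σ ⊗ₖ (((Fintype.card c : ℂ))⁻¹ • 1))) - ρ
          = (Fintype.card c : ℂ) • EE ((((2:ℝ) ^ lam : ℝ) : ℂ) • ((1 : Matrix a a ℂ) ⊗ₖ σ)
              - margAB ρ) + ((Fintype.card c : ℂ) • EE (margAB ρ) - ρ) := by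
        rw [EE_sub, EE_smul, smul_sub, sub_add_sub_cancel, kron_eq, hs, smul_smul]
      rw [hmat]
      exact ((psd_natsmul (EE_psd hpsd) _).add (key_psd ρ hρ))
  have hk : 0 ≤ 2 * Real.logb 2 (Fintype.card c) := by
    have h1 : (1:ℝ) ≤ (Fintype.card c : ℝ) := by exact_mod_cast hnpos
    have := Real.logb_nonneg (b := 2) (by norm_num) h1
    linarith
  have hbdd : BddBelow S2 := by
    refine ⟨-Real.logb 2 (Fintype.card a), fun lam hlam => ?_⟩
    obtain ⟨σ, hσ, hσ1, hpsd⟩ := hlam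
    have htr := psd_trace_nonneg hpsd
    rw [trace_sub, trace_smul, trace_kronecker, trace_one, hσ1, hρ1, mul_one, smul_eq_mul] at htr
    have hApos : (0:ℝ) < (Fintype.card a : ℝ) := by
      exact_mod_cast Fintype.card_pos (α := a)
    have hre : (1:ℝ) ≤ (2:ℝ) ^ lam * (Fintype.card a : ℝ) := by
      rw [Complex.le_def] at htr
      have h1 := htr.1
      simp [Complex.sub_re, Complex.mul_re] at h1
      linarith
    have h1 : ((Fintype.card a : ℝ))⁻¹ ≤ (2:ℝ) ^ lam := by
      rw [inv_eq_one_div]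
      exact (div_le_iff₀ hApos).mpr hre
    have h2 := Real.logb_le_logb_of_le (by norm_num : (1:ℝ) < 2) (by positivity) h1
    rw [Real.logb_rpow (by norm_num) (by norm_num), Real.logb_inv] at h2
    linarith
  rw [hH1, hH2]
  rcases Set.eq_empty_or_nonempty S1 with h | h
  · have h2 : S2 = ∅ := Set.subset_eq_empty hsub h
    rw [h, h2, Real.sInf_empty]
    linarith
  · have hle : sInf S2 - 2 * Real.logb 2 (Fintype.card c) ≤ sInf S1 := by
      apply le_csInf h
      intro lam hlam
      have := csInf_le hbdd (hstep lam hlam)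
      linarith
    linarith
end

section
/- Partial trace operator bound: for any positive semi-definite operator ρ^{ABC} on A ⊗ B ⊗ C, the operator inequality |C| · (Tr_C ρ^{ABC}) ⊗ I^C ≥ ρ^{ABC} holds, where |C| is the dimension of C. -/
open Matrix ComplexOrder Kronecker

private lemma mulVec_sum' {d m' n' : Type*} [Fintype d] [Fintype n']
    (ρ : Matrix m' n' ℂ) (w : d → n' → ℂ) :
    ρ *ᵥ (∑ k, w k) = ∑ k, ρ *ᵥ w k := by
  funext i
  simp [Matrix.mulVec, dotProduct, Finset.mul_sum]
  rw [Finset.sum_comm]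

private lemma sum_dotProduct' {d m' : Type*} [Fintype d] [Fintype m']
    (u : d → m' → ℂ) (v : m' → ℂ) :
    (∑ k, u k) ⬝ᵥ v = ∑ k, u k ⬝ᵥ v := by
  simp [dotProduct, Finset.sum_mul]
  rw [Finset.sum_comm]

private lemma dotProduct_sum' {d m' : Type*} [Fintype d] [Fintype m']
    (v : m' → ℂ) (u : d → m' → ℂ) :
    v ⬝ᵥ (∑ k, u k) = ∑ k, v ⬝ᵥ u k := by
  simp [dotProduct, Finset.mul_sum]
  rw [Finset.sum_comm]

private lemma quad_sum_le {d m' : Type*} [Fintype d] [Fintype m']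
    (ρ : Matrix m' m' ℂ) (hρ : ρ.PosSemidef) (w : d → m' → ℂ) :
    star (∑ k, w k) ⬝ᵥ ρ *ᵥ (∑ k, w k) ≤ (Fintype.card d : ℂ) * ∑ k, star (w k) ⬝ᵥ ρ *ᵥ w k := by
  set B : d → d → ℂ := fun k l => star (w k) ⬝ᵥ ρ *ᵥ w l with hB
  have hexp : star (∑ k, w k) ⬝ᵥ ρ *ᵥ (∑ k, w k) = ∑ k, ∑ l, B k l := by
    rw [star_sum, mulVec_sum', sum_dotProduct']
    exact Finset.sum_congr rfl fun k _ => dotProduct_sum' _ _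
  have hpt : ∀ k l, star (w k - w l) ⬝ᵥ ρ *ᵥ (w k - w l)
      = B k k - B k l - B l k + B l l := by
    intro k l
    rw [star_sub, Matrix.mulVec_sub, sub_dotProduct, dotProduct_sub,
      dotProduct_sub]
    ring
  have hnn : 0 ≤ ∑ k, ∑ l, star (w k - w l) ⬝ᵥ ρ *ᵥ (w k - w l) :=
    Finset.sum_nonneg fun k _ => Finset.sum_nonneg fun l _ => hρ.dotProduct_mulVec_nonneg _
  have hswap : ∑ k, ∑ l, B l k = ∑ k, ∑ l, B k l := Finset.sum_comm
  have hid : ∑ k, ∑ l, star (w k - w l) ⬝ᵥ ρ *ᵥ (w k - w l)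
      = 2 * ((Fintype.card d : ℂ) * ∑ k, B k k - ∑ k, ∑ l, B k l) := by
    simp only [hpt, Finset.sum_add_distrib, Finset.sum_sub_distrib, Finset.sum_const,
      Finset.card_univ, nsmul_eq_mul, ← Finset.mul_sum]
    rw [hswap]
    ring
  rw [hexp]
  have h2 : 0 ≤ 2 * ((Fintype.card d : ℂ) * ∑ k, B k k - ∑ k, ∑ l, B k l) := hid ▸ hnn
  have h3 : (0:ℂ) ≤ (Fintype.card d : ℂ) * ∑ k, B k k - ∑ k, ∑ l, B k l := by
    rw [Complex.le_def] at h2 ⊢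
    simp only [Complex.mul_re, Complex.mul_im, Complex.zero_re, Complex.zero_im,
      Complex.sub_re, Complex.sub_im, Complex.re_sum, Complex.im_sum] at h2 ⊢
    norm_num at h2 ⊢
    exact ⟨by linarith [h2.1], by linarith [h2.2]⟩
  exact sub_nonneg.mp h3

/-- Partial trace over the system `C` of an operator on `(A ⊗ B) ⊗ C`. -/
noncomputable def ptraceC {a b c : Type*} [Fintype a] [Fintype b] [Fintype c]
    (ρ : Matrix ((a × b) × c) ((a × b) × c) ℂ) : Matrix (a × b) (a × b) ℂ :=
  Matrix.of fun p q => ∑ k : c, ρ (p, k) (q, k)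

/-- Partial trace operator bound: `|C| · (Tr_C ρ) ⊗ I^C ≥ ρ` in the Loewner order, for any
positive semi-definite `ρ` on `A ⊗ B ⊗ C`. -/
theorem ptrace_dim_operator_bound {a b c : Type*} [Fintype a] [Fintype b] [Fintype c]
    [DecidableEq a] [DecidableEq b] [DecidableEq c]
    (ρ : Matrix ((a × b) × c) ((a × b) × c) ℂ) (hρ : ρ.PosSemidef) :
    (((Fintype.card c : ℂ)) • (ptraceC ρ ⊗ₖ (1 : Matrix c c ℂ)) - ρ).PosSemidef := by
  classical
  have hH := hρ.1
  refine Matrix.PosSemidef.of_dotProduct_mulVec_nonneg ?_ ?_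
  · show _ = _
    ext ⟨p, k⟩ ⟨q, l⟩
    simp only [Matrix.conjTranspose_apply, Matrix.sub_apply, Matrix.smul_apply, ptraceC,
      Matrix.kroneckerMap_apply, Matrix.one_apply, Matrix.of_apply, smul_eq_mul, star_sub,
      star_mul', star_sum]
    rw [hH.apply]
    have hs : ∀ m : c, star (ρ (q, m) (p, m)) = ρ (p, m) (q, m) := fun m => by
      rw [← Matrix.conjTranspose_apply, hH.eq]
    simp [hs, apply_ite (star : ℂ → ℂ), eq_comm]
  · intro x
    set n : ℂ := (Fintype.card c : ℂ) with hn
    set M := ptraceC ρ ⊗ₖ (1 : Matrix c c ℂ) with hM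
    set u : c → c → (((a × b) × c) → ℂ) := fun k m pl => if pl.2 = m then x (pl.1, k) else 0
      with hu
    have hx : x = ∑ k, u k k := by
      funext pl
      simp [hu, Finset.sum_apply]
    have claimA : star x ⬝ᵥ (M *ᵥ x) = ∑ k, ∑ m, star (u k m) ⬝ᵥ ρ *ᵥ (u k m) := by
      have key1 : ∀ (k m : c) (v : ((a × b) × c) → ℂ),
          star (u k m) ⬝ᵥ v = ∑ p : a × b, star (x (p, k)) * v (p, m) := by
        intro k m v
        rw [dotProduct, Fintype.sum_prod_type]
        refine Finset.sum_congr rfl fun p _ => ?_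
        simp [hu, apply_ite (star : ℂ → ℂ), ite_mul]
      have key2 : ∀ (k m : c) (pl : (a × b) × c),
          (ρ *ᵥ u k m) pl = ∑ q : a × b, ρ pl (q, m) * x (q, k) := by
        intro k m pl
        rw [Matrix.mulVec, dotProduct, Fintype.sum_prod_type]
        refine Finset.sum_congr rfl fun q _ => ?_
        simp [hu, mul_ite]
      have key3 : ∀ (p : a × b) (k : c),
          (M *ᵥ x) (p, k) = ∑ m : c, ∑ q : a × b, ρ (p, m) (q, m) * x (q, k) := by
        intro p k
        rw [Matrix.mulVec, dotProduct, Fintype.sum_prod_type]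
        have h1 : ∀ q : a × b, ∑ l : c, M (p, k) (q, l) * x (q, l)
            = ∑ m : c, ρ (p, m) (q, m) * x (q, k) := by
          intro q
          simp [hM, Matrix.one_apply, ptraceC, mul_ite, ite_mul, mul_zero, zero_mul,
            Finset.sum_ite_eq, Finset.sum_ite_eq', Finset.sum_mul]
        rw [Finset.sum_congr rfl fun q _ => h1 q, Finset.sum_comm]
      have hR : ∀ k m : c, star (u k m) ⬝ᵥ ρ *ᵥ u k m
          = ∑ p : a × b, star (x (p, k)) * ∑ q : a × b, ρ (p, m) (q, m) * x (q, k) := by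
        intro k m
        rw [key1]
        exact Finset.sum_congr rfl fun p _ => by rw [key2]
      rw [dotProduct, Fintype.sum_prod_type]
      calc ∑ p : a × b, ∑ k : c, star x (p, k) * (M *ᵥ x) (p, k)
          = ∑ p : a × b, ∑ k : c, ∑ m : c,
              star (x (p, k)) * ∑ q : a × b, ρ (p, m) (q, m) * x (q, k) := by
            refine Finset.sum_congr rfl fun p _ => Finset.sum_congr rfl fun k _ => ?_
            rw [key3, Pi.star_apply, Finset.mul_sum]
        _ = ∑ k : c, ∑ p : a × b, ∑ m : c,
              star (x (p, k)) * ∑ q : a × b, ρ (p, m) (q, m) * x (q, k) := Finset.sum_comm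
        _ = ∑ k : c, ∑ m : c, ∑ p : a × b,
              star (x (p, k)) * ∑ q : a × b, ρ (p, m) (q, m) * x (q, k) :=
            Finset.sum_congr rfl fun k _ => Finset.sum_comm
        _ = ∑ k, ∑ m, star (u k m) ⬝ᵥ ρ *ᵥ u k m :=
            Finset.sum_congr rfl fun k _ => Finset.sum_congr rfl fun m _ => (hR k m).symm
    have expand : star x ⬝ᵥ ((n • M - ρ) *ᵥ x)
        = n * (star x ⬝ᵥ M *ᵥ x) - star x ⬝ᵥ ρ *ᵥ x := by
      rw [Matrix.sub_mulVec, dotProduct_sub, Matrix.smul_mulVec,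
        dotProduct_smul, smul_eq_mul]
    rw [expand, claimA]
    have hc : (0:ℂ) ≤ n := by rw [hn, Complex.le_def]; simp
    have hle1 : star x ⬝ᵥ ρ *ᵥ x ≤ n * ∑ k, star (u k k) ⬝ᵥ ρ *ᵥ (u k k) := by
      conv_lhs => rw [hx]
      exact quad_sum_le ρ hρ _
    have hle2 : ∑ k, star (u k k) ⬝ᵥ ρ *ᵥ (u k k)
        ≤ ∑ k, ∑ m, star (u k m) ⬝ᵥ ρ *ᵥ (u k m) := by
      refine Finset.sum_le_sum fun k _ => ?_
      exact Finset.single_le_sum (fun m _ => hρ.dotProduct_mulVec_nonneg (u k m)) (Finset.mem_univ k)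
    exact sub_nonneg.mpr (hle1.trans (mul_le_mul_of_nonneg_left hle2 hc))
end

section
/- Triangle inequality for the purified distance: for sub-normalized states ρ, σ, τ on a finite-dimensional Hilbert space, P(ρ,τ) ≤ P(ρ,σ) + P(σ,τ). -/
open Matrix ComplexOrder
open scoped Classical

/-- Total positive-semidefinite square root: the PSD square root when the matrix is PSD,
and `0` otherwise. -/

noncomputable def msqrt {n : Type*} [Fintype n] [DecidableEq n] (ρ : Matrix n n ℂ) :
    Matrix n n ℂ :=
  if h : ρ.PosSemidef then
    (h.1.eigenvectorUnitary : Matrix n n ℂ) * diagonal ((↑) ∘ (√·) ∘ h.1.eigenvalues) *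
      (star h.1.eigenvectorUnitary : Matrix n n ℂ)
  else 0

/-- Trace norm `‖M‖₁ = Tr √(M Mᴴ)`. -/
noncomputable def traceNorm {n : Type*} [Fintype n] [DecidableEq n] (M : Matrix n n ℂ) : ℝ :=
  ((msqrt (M * Mᴴ)).trace).re

/-- Fidelity `F(ρ,σ) = ‖√ρ √σ‖₁`. -/
noncomputable def fidelity {n : Type*} [Fintype n] [DecidableEq n] (ρ σ : Matrix n n ℂ) : ℝ :=
  traceNorm (msqrt ρ * msqrt σ)

/-- Generalized fidelity `F̄(ρ,σ) = F(ρ,σ) + √((1 - Tr ρ)(1 - Tr σ))`. -/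
noncomputable def genFid {n : Type*} [Fintype n] [DecidableEq n] (ρ σ : Matrix n n ℂ) : ℝ :=
  fidelity ρ σ + Real.sqrt ((1 - ρ.trace.re) * (1 - σ.trace.re))

/-- Purified distance `P(ρ,σ) = √(1 - F̄(ρ,σ)²)`. -/
noncomputable def pdist {n : Type*} [Fintype n] [DecidableEq n] (ρ σ : Matrix n n ℂ) : ℝ :=
  Real.sqrt (1 - (genFid ρ σ) ^ 2)

open scoped InnerProductSpace


section basic
variable {n : Type*} [Fintype n] [DecidableEq n]

lemma msqrt_of_psd {ρ : Matrix n n ℂ} (h : ρ.PosSemidef) : msqrt ρ =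
    (h.1.eigenvectorUnitary : Matrix n n ℂ) * diagonal ((↑) ∘ (√·) ∘ h.1.eigenvalues) *
      (star h.1.eigenvectorUnitary : Matrix n n ℂ) := dif_pos h

lemma msqrt_posSemidef {ρ : Matrix n n ℂ} (h : ρ.PosSemidef) : (msqrt ρ).PosSemidef := by
  rw [msqrt_of_psd h]
  have hD : (diagonal (((↑) ∘ (√·) ∘ h.1.eigenvalues) : n → ℂ)).PosSemidef :=
    PosSemidef.diagonal (fun i => Complex.zero_le_real.mpr (Real.sqrt_nonneg _))
  exact hD.mul_mul_conjTranspose_same _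

lemma msqrt_mul_self {ρ : Matrix n n ℂ} (h : ρ.PosSemidef) : msqrt ρ * msqrt ρ = ρ := by
  rw [msqrt_of_psd h]
  set U : Matrix n n ℂ := (h.1.eigenvectorUnitary : Matrix n n ℂ) with hUdef
  have hU : star U * U = 1 := (Matrix.mem_unitaryGroup_iff').mp h.1.eigenvectorUnitary.2
  have hD : diagonal (((↑) ∘ (√·) ∘ h.1.eigenvalues) : n → ℂ) *
      diagonal (((↑) ∘ (√·) ∘ h.1.eigenvalues) : n → ℂ) =
      diagonal (RCLike.ofReal ∘ h.1.eigenvalues) := by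
    rw [diagonal_mul_diagonal]
    congr 1
    ext i
    simp only [Function.comp_apply]
    rw [← Complex.ofReal_mul, Real.mul_self_sqrt (h.eigenvalues_nonneg i)]
    rfl
  have hs := h.1.spectral_theorem
  rw [Unitary.conjStarAlgAut_apply] at hs
  simp only [mul_assoc]
  rw [← mul_assoc (star U) U, hU, one_mul, ← mul_assoc (diagonal _) (diagonal _), hD]
  rw [← mul_assoc]
  exact hs.symm

lemma msqrt_herm {ρ : Matrix n n ℂ} (h : ρ.PosSemidef) : (msqrt ρ)ᴴ = msqrt ρ :=
  (msqrt_posSemidef h).1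

lemma trace_nonneg' {M : Matrix n n ℂ} (h : M.PosSemidef) : (0:ℂ) ≤ M.trace := by
  rw [Matrix.trace]
  apply Finset.sum_nonneg
  intro i _
  have := h.diag_nonneg (i := i)
  simpa [dotProduct, Pi.single_apply] using this

lemma trace_re_nonneg {M : Matrix n n ℂ} (h : M.PosSemidef) : 0 ≤ M.trace.re := by
  have := trace_nonneg' h
  rw [Complex.le_def] at this
  simpa using this.1

lemma trace_eq_re {M : Matrix n n ℂ} (h : M.PosSemidef) :
    M.trace = (M.trace.re : ℂ) := by
  have := trace_nonneg' h
  rw [Complex.le_def] at this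
  exact (Complex.ext rfl (by simpa using this.2.symm))

end basic

/-- Scalar lemma -/
lemma scalarS {α β γ : ℝ} (hα0 : 0 ≤ α) (hα1 : α ≤ 1) (hβ0 : 0 ≤ β) (hβ1 : β ≤ 1)
    (hγ : α * β - Real.sqrt (1 - α^2) * Real.sqrt (1 - β^2) ≤ γ) :
    Real.sqrt (1 - γ^2) ≤ Real.sqrt (1 - α^2) + Real.sqrt (1 - β^2) := by
  set u := Real.sqrt (1 - α^2) with hu_def
  set v := Real.sqrt (1 - β^2) with hv_def
  have hu0 : 0 ≤ u := Real.sqrt_nonneg _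
  have hv0 : 0 ≤ v := Real.sqrt_nonneg _
  have hu : u^2 = 1 - α^2 := Real.sq_sqrt (by nlinarith)
  have hv : v^2 = 1 - β^2 := Real.sq_sqrt (by nlinarith)
  have key : 1 - γ^2 ≤ (u + v)^2 := by
    rcases le_or_gt (α*β) (u*v) with hc | hc
    · nlinarith [sq_nonneg (α - β), sq_nonneg γ, mul_nonneg hu0 hv0]
    · have hγ0 : 0 ≤ γ := by nlinarith
      have h2 : (α*β - u*v)^2 ≤ γ^2 := by nlinarith
      have hαβ1 : α * β ≤ 1 := by nlinarith
      nlinarith [mul_nonneg (mul_nonneg hu0 hv0) (sub_nonneg.2 hαβ1), sq_nonneg (u*v)]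
  calc Real.sqrt (1 - γ^2) ≤ Real.sqrt ((u+v)^2) := Real.sqrt_le_sqrt key
    _ = u + v := Real.sqrt_sq (by positivity)


lemma geomG {E : Type*} [NormedAddCommGroup E] [InnerProductSpace ℂ E]
    {x y z : E} (hx : ‖x‖ = 1) (hy : ‖y‖ = 1) (hz : ‖z‖ = 1)
    {α β : ℝ} (hxy : ⟪y, x⟫_ℂ = (α:ℂ)) (hyz : ⟪y, z⟫_ℂ = (β:ℂ)) :
    α * β - Real.sqrt (1-α^2) * Real.sqrt (1-β^2) ≤ (⟪x, z⟫_ℂ).re := by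
  have hyx : ⟪x, y⟫_ℂ = (α:ℂ) := by
    rw [← inner_conj_symm, hxy]; simp
  have hzy : ⟪z, y⟫_ℂ = (β:ℂ) := by
    rw [← inner_conj_symm, hyz]; simp
  have hyy : ⟪y, y⟫_ℂ = 1 := by
    rw [inner_self_eq_norm_sq_to_K, hy]; norm_num
  set x' := x - (α:ℂ) • y with hx'def
  set z' := z - (β:ℂ) • y with hz'def
  have hinner : ⟪x', z'⟫_ℂ = ⟪x, z⟫_ℂ - (α:ℂ) * β := by
    simp only [hx'def, hz'def, inner_sub_left, inner_sub_right, inner_smul_left,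
      inner_smul_right, hxy, hyz, hyx, hyy]
    ring_nf
  have hxx0 : ⟪x, x⟫_ℂ = 1 := by
    rw [inner_self_eq_norm_sq_to_K, hx]; norm_num
  have hzz0 : ⟪z, z⟫_ℂ = 1 := by
    rw [inner_self_eq_norm_sq_to_K, hz]; norm_num
  have hxx : ⟪x', x'⟫_ℂ = ((1 - α^2 : ℝ) : ℂ) := by
    simp only [hx'def, inner_sub_left, inner_sub_right, inner_smul_left,
      inner_smul_right, hxy, hyx, hyy, hxx0]
    simp [Complex.conj_ofReal]
    push_cast
    ring
  have hzz : ⟪z', z'⟫_ℂ = ((1 - β^2 : ℝ) : ℂ) := by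
    simp only [hz'def, inner_sub_left, inner_sub_right, inner_smul_left,
      inner_smul_right, hyz, hzy, hyy, hzz0]
    simp [Complex.conj_ofReal]
    push_cast
    ring
  have hnx : ‖x'‖ = Real.sqrt (1 - α^2) := by
    have h1 : (‖x'‖^2 : ℝ) = 1 - α^2 := by
      have := @inner_self_eq_norm_sq ℂ _ _ _ _ x'
      simp only [hxx, RCLike.ofReal_re] at this
      exact this.symm
    rw [← h1, Real.sqrt_sq (norm_nonneg _)]
  have hnz : ‖z'‖ = Real.sqrt (1 - β^2) := by
    have h1 : (‖z'‖^2 : ℝ) = 1 - β^2 := by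
      have := @inner_self_eq_norm_sq ℂ _ _ _ _ z'
      simp only [hzz, RCLike.ofReal_re] at this
      exact this.symm
    rw [← h1, Real.sqrt_sq (norm_nonneg _)]
  have hb : -(‖x'‖ * ‖z'‖) ≤ (⟪x', z'⟫_ℂ).re := by
    have h1 : |(⟪x', z'⟫_ℂ).re| ≤ ‖⟪x', z'⟫_ℂ‖ := Complex.abs_re_le_norm _
    have h2 : ‖⟪x', z'⟫_ℂ‖ ≤ ‖x'‖ * ‖z'‖ := norm_inner_le_norm _ _
    have := neg_abs_le (⟪x', z'⟫_ℂ).re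
    linarith
  have hre : (⟪x', z'⟫_ℂ).re = (⟪x, z⟫_ℂ).re - α * β := by
    rw [hinner]; simp
  rw [hnx, hnz] at hb
  linarith

section polar
variable {n : Type*} [Fintype n] [DecidableEq n]

lemma polar (M : Matrix n n ℂ) :
    ∃ K : Matrix n n ℂ, K ∈ Matrix.unitaryGroup n ℂ ∧ M = msqrt (M * Mᴴ) * K := by
  have hMM : (M * Mᴴ).PosSemidef := posSemidef_self_mul_conjTranspose M
  have hH : (M * Mᴴ).IsHermitian := hMM.1
  set W : Matrix n n ℂ := (hH.eigenvectorUnitary : Matrix n n ℂ) with hWdef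
  have hWmem : W ∈ Matrix.unitaryGroup n ℂ := hH.eigenvectorUnitary.2
  have hWW : W * Wᴴ = 1 := by
    have := (Matrix.mem_unitaryGroup_iff).mp hWmem
    rwa [Matrix.star_eq_conjTranspose] at this
  have hWW' : Wᴴ * W = 1 := by
    have := (Matrix.mem_unitaryGroup_iff').mp hWmem
    rwa [Matrix.star_eq_conjTranspose] at this
  set d : n → ℝ := hH.eigenvalues with hddef
  have hd0 : ∀ i, 0 ≤ d i := fun i => hMM.eigenvalues_nonneg i
  have hspec : M * Mᴴ = W * diagonal (RCLike.ofReal ∘ d) * Wᴴ := by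
    have := hH.spectral_theorem
    rw [Unitary.conjStarAlgAut_apply] at this
    rwa [Matrix.star_eq_conjTranspose] at this
  have hsqrt : msqrt (M * Mᴴ) = W * diagonal ((↑) ∘ Real.sqrt ∘ d) * Wᴴ := by
    rw [msqrt_of_psd hMM]; rfl
  set N : Matrix n n ℂ := Wᴴ * M with hNdef
  have hNN : N * Nᴴ = diagonal (RCLike.ofReal ∘ d) := by
    have h1 : N * Nᴴ = Wᴴ * (M * Mᴴ) * W := by
      rw [hNdef, Matrix.conjTranspose_mul, Matrix.conjTranspose_conjTranspose]
      noncomm_ring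
    rw [h1, hspec]
    calc Wᴴ * (W * diagonal (RCLike.ofReal ∘ d) * Wᴴ) * W
        = (Wᴴ * W) * diagonal (RCLike.ofReal ∘ d) * (Wᴴ * W) := by noncomm_ring
      _ = diagonal (RCLike.ofReal ∘ d) := by rw [hWW']; simp
  have hrow : ∀ i k, ∑ j, N i j * star (N k j) = if i = k then ((d i : ℝ) : ℂ) else 0 := by
    intro i k
    have h := congrFun (congrFun hNN i) k
    rw [Matrix.mul_apply] at h
    simp only [Matrix.conjTranspose_apply, Matrix.diagonal_apply, Function.comp_apply] at h
    convert h using 2 <;> rfl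
  have hrow0 : ∀ i, d i = 0 → ∀ j, N i j = 0 := by
    intro i hdi j
    have h := hrow i i
    rw [if_pos rfl, hdi] at h
    push_cast at h
    have h2 : ∑ j, (Complex.normSq (N i j) : ℂ) = 0 := by
      rw [← h]
      refine Finset.sum_congr rfl fun j _ => ?_
      rw [← Complex.mul_conj]
      rfl
    have h3 : ∑ j, Complex.normSq (N i j) = 0 := by
      have := congrArg Complex.re h2
      simpa using this
    have h4 : Complex.normSq (N i j) = 0 :=
      (Finset.sum_eq_zero_iff_of_nonneg (fun j _ => Complex.normSq_nonneg _)).mp h3 j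
        (Finset.mem_univ j)
    exact Complex.normSq_eq_zero.mp h4
  set v : n → EuclideanSpace ℂ n := fun i =>
    (WithLp.equiv 2 _).symm (fun j => (((Real.sqrt (d i) : ℝ) : ℂ))⁻¹ * N i j) with hvdef
  set s : Set n := {i | d i ≠ 0} with hsdef
  have hsnz : ∀ i : n, d i ≠ 0 → ((Real.sqrt (d i) : ℝ) : ℂ) ≠ 0 := by
    intro i hdi
    have hs : Real.sqrt (d i) ≠ 0 := by
      rw [Real.sqrt_ne_zero']
      exact lt_of_le_of_ne (hd0 i) (Ne.symm hdi)
    exact_mod_cast hs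
  have hON : Orthonormal ℂ (s.restrict v) := by
    rw [orthonormal_iff_ite]
    rintro ⟨i, hi⟩ ⟨k, hk⟩
    have hvik : ⟪s.restrict v ⟨i, hi⟩, s.restrict v ⟨k, hk⟩⟫_ℂ =
        (((Real.sqrt (d i) : ℝ) : ℂ))⁻¹ * (((Real.sqrt (d k) : ℝ) : ℂ))⁻¹ *
          (if k = i then ((d k : ℝ) : ℂ) else 0) := by
      rw [← hrow k i]
      simp only [Set.restrict_apply, hvdef, PiLp.inner_apply, WithLp.equiv_symm_apply, PiLp.toLp_apply,
        RCLike.inner_apply, Set.restrict, WithLp.ofLp_toLp]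
      rw [Finset.mul_sum]
      apply Finset.sum_congr rfl
      intro j _
      simp only [_root_.map_mul, map_inv₀, Complex.star_def, Complex.conj_ofReal]
      ring
    rw [hvik]
    rcases eq_or_ne i k with h | h
    · subst h
      rw [if_pos rfl, if_pos rfl]
      have hne := hsnz i hi
      have h2 : ((Real.sqrt (d i) : ℝ) : ℂ) * ((Real.sqrt (d i) : ℝ) : ℂ) = ((d i : ℝ) : ℂ) := by
        rw [← Complex.ofReal_mul, Real.mul_self_sqrt (hd0 i)]
      field_simp
      rw [← h2]; ring
    · rw [if_neg (Ne.symm h), if_neg (by simpa [Subtype.mk_eq_mk] using h), mul_zero]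
  obtain ⟨b, hb⟩ := hON.exists_orthonormalBasis_extension_of_card_eq
    (finrank_euclideanSpace (𝕜 := ℂ) (ι := n))
  set K₀ : Matrix n n ℂ := Matrix.of (fun i j => b i j) with hK₀def
  have hK₀mem : K₀ ∈ Matrix.unitaryGroup n ℂ := by
    rw [Matrix.mem_unitaryGroup_iff, Matrix.star_eq_conjTranspose]
    ext i k
    rw [Matrix.mul_apply]
    have hbik := orthonormal_iff_ite.mp b.orthonormal i k
    have : ∑ j, K₀ i j * (K₀ᴴ) j k = star (⟪b i, b k⟫_ℂ) := by
      rw [PiLp.inner_apply, star_sum]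
      refine Finset.sum_congr rfl fun j _ => ?_
      simp only [hK₀def, Matrix.conjTranspose_apply, Matrix.of_apply, RCLike.inner_apply,
        star_mul', star_star, Complex.star_def, Complex.conj_conj]; ring
    rw [this, hbik]
    rcases eq_or_ne i k with h | h
    · subst h; simp
    · simp [h, Matrix.one_apply_ne h]
  have hNK : N = diagonal ((↑) ∘ Real.sqrt ∘ d) * K₀ := by
    ext i j
    rw [Matrix.diagonal_mul]
    rcases eq_or_ne (d i) 0 with hdi | hdi
    · rw [hrow0 i hdi j]
      simp [hdi, hK₀def]
    · have hbi : b i = v i := hb i hdi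
      simp only [hK₀def, Matrix.of_apply, Function.comp_apply, hbi, hvdef,
        WithLp.equiv_symm_apply, PiLp.toLp_apply]
      rw [← mul_assoc, mul_inv_cancel₀ (hsnz i hdi), one_mul]
  refine ⟨W * K₀, mul_mem hWmem hK₀mem, ?_⟩
  have hM : M = W * N := by
    rw [hNdef, ← mul_assoc, hWW, one_mul]
  rw [hsqrt]
  conv_lhs => rw [hM, hNK]
  calc W * (diagonal ((↑) ∘ Real.sqrt ∘ d) * K₀)
      = W * diagonal ((↑) ∘ Real.sqrt ∘ d) * (Wᴴ * W) * K₀ := by rw [hWW']; noncomm_ring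
    _ = W * diagonal ((↑) ∘ Real.sqrt ∘ d) * Wᴴ * (W * K₀) := by noncomm_ring

end polar

section emb
variable {n : Type*} [Fintype n] [DecidableEq n]

noncomputable def emb (A : Matrix n n ℂ) (s : ℝ) : EuclideanSpace ℂ ((n × n) ⊕ Unit) :=
  (WithLp.equiv 2 _).symm (Sum.elim (fun p => A p.1 p.2) (fun _ => (s:ℂ)))

lemma inner_emb (A B : Matrix n n ℂ) (s t : ℝ) :
    ⟪emb A s, emb B t⟫_ℂ = (Aᴴ * B).trace + ((s * t : ℝ) : ℂ) := by
  simp only [emb, PiLp.inner_apply, WithLp.equiv_symm_apply, PiLp.toLp_apply, RCLike.inner_apply]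
  rw [Fintype.sum_sum_type]
  have h1 : (Aᴴ * B).trace = ∑ p : n × n, (starRingEnd ℂ) (A p.1 p.2) * B p.1 p.2 := by
    rw [Matrix.trace, Fintype.sum_prod_type]
    simp only [Matrix.diag, Matrix.mul_apply, Matrix.conjTranspose_apply]
    rw [Finset.sum_comm]
    rfl
  rw [h1]
  congr 1
  · simp [mul_comm]
  · simp [Complex.conj_ofReal, Complex.ofReal_mul, Sum.elim_inr, mul_comm]

lemma norm_emb (A : Matrix n n ℂ) (s : ℝ) :
    ‖emb A s‖ = Real.sqrt (((Aᴴ * A).trace).re + s^2) := by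
  have h1 := @inner_self_eq_norm_sq ℂ _ _ _ _ (emb A s)
  rw [inner_emb] at h1
  have h2 : ‖emb A s‖^2 = ((Aᴴ * A).trace).re + s^2 := by
    rw [← h1]
    simp [pow_two]
  rw [← h2, Real.sqrt_sq (norm_nonneg _)]
end emb

section main
variable {n : Type*} [Fintype n] [DecidableEq n]

lemma unitary_mul_conjT {K : Matrix n n ℂ} (h : K ∈ Matrix.unitaryGroup n ℂ) :
    K * Kᴴ = 1 := by
  have := (Matrix.mem_unitaryGroup_iff).mp h
  rwa [Matrix.star_eq_conjTranspose] at this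

lemma unitary_conjT_mul {K : Matrix n n ℂ} (h : K ∈ Matrix.unitaryGroup n ℂ) :
    Kᴴ * K = 1 := by
  have := (Matrix.mem_unitaryGroup_iff').mp h
  rwa [Matrix.star_eq_conjTranspose] at this

lemma unitary_conjT_mem {K : Matrix n n ℂ} (h : K ∈ Matrix.unitaryGroup n ℂ) :
    Kᴴ ∈ Matrix.unitaryGroup n ℂ := by
  rw [Matrix.mem_unitaryGroup_iff, Matrix.star_eq_conjTranspose, Matrix.conjTranspose_conjTranspose]
  exact unitary_conjT_mul h

/-- Dual bound: `Re Tr (M Q) ≤ ‖M‖₁` for unitary `Q`. -/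
lemma trace_mul_unitary_re_le (M Q : Matrix n n ℂ) (hQ : Q ∈ Matrix.unitaryGroup n ℂ) :
    ((M * Q).trace).re ≤ traceNorm M := by
  obtain ⟨K, hKu, hM⟩ := polar M
  set P := msqrt (M * Mᴴ) with hPdef
  have hP : P.PosSemidef := msqrt_posSemidef (posSemidef_self_mul_conjTranspose M)
  set S := msqrt P with hSdef
  have hS : S.PosSemidef := msqrt_posSemidef hP
  have hSH : Sᴴ = S := hS.1
  have hSS : S * S = P := msqrt_mul_self hP
  have hKQu : (K * Q) ∈ Matrix.unitaryGroup n ℂ := mul_mem hKu hQ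
  have key : M * Q = S * (S * (K * Q)) := by
    rw [hM, ← hSS]
    noncomm_ring
  have h1 : (M * Q).trace = ⟪emb S 0, emb (S * (K * Q)) 0⟫_ℂ := by
    rw [inner_emb, key, hSH]
    simp [mul_assoc]
  have h2 : ‖emb S 0‖ = Real.sqrt (P.trace.re) := by
    rw [norm_emb, hSH, hSS]
    norm_num
  have h3 : ‖emb (S * (K * Q)) 0‖ = Real.sqrt (P.trace.re) := by
    rw [norm_emb]
    have hc : (S * (K * Q))ᴴ * (S * (K * Q)) = (K * Q)ᴴ * P * (K * Q) := by
      rw [Matrix.conjTranspose_mul, hSH, ← hSS]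
      noncomm_ring
    have htr : ((K * Q)ᴴ * P * (K * Q)).trace = P.trace := by
      rw [Matrix.trace_mul_comm, ← mul_assoc, unitary_mul_conjT hKQu, one_mul]
    rw [hc, htr]
    norm_num
  have h4 : ((M * Q).trace).re ≤ ‖⟪emb S 0, emb (S * (K * Q)) 0⟫_ℂ‖ := by
    rw [h1]
    exact Complex.re_le_norm _
  have h5 : ‖⟪emb S 0, emb (S * (K * Q)) 0⟫_ℂ‖ ≤ ‖emb S 0‖ * ‖emb (S * (K * Q)) 0‖ :=
    norm_inner_le_norm _ _
  have h6 : ‖emb S 0‖ * ‖emb (S * (K * Q)) 0‖ = P.trace.re := by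
    rw [h2, h3, Real.mul_self_sqrt (trace_re_nonneg hP)]
  have : traceNorm M = P.trace.re := rfl
  linarith

end main

/-- Triangle inequality for the purified distance on sub-normalized states. -/
theorem pdist_triangle {n : Type*} [Fintype n] [DecidableEq n]
    (ρ σ τ : Matrix n n ℂ)
    (hρ : ρ.PosSemidef) (hρ1 : ρ.trace.re ≤ 1)
    (hσ : σ.PosSemidef) (hσ1 : σ.trace.re ≤ 1)
    (hτ : τ.PosSemidef) (hτ1 : τ.trace.re ≤ 1) :
    pdist ρ τ ≤ pdist ρ σ + pdist σ τ := by
  have hA := msqrt_posSemidef hρ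
  have hB := msqrt_posSemidef hσ
  have hC := msqrt_posSemidef hτ
  set A := msqrt ρ with hAdef
  set B := msqrt σ with hBdef
  set C := msqrt τ with hCdef
  have hAH : Aᴴ = A := hA.1
  have hBH : Bᴴ = B := hB.1
  have hCH : Cᴴ = C := hC.1
  have hAA : A * A = ρ := msqrt_mul_self hρ
  have hBB : B * B = σ := msqrt_mul_self hσ
  have hCC : C * C = τ := msqrt_mul_self hτ
  obtain ⟨K₁, hK₁u, hM₁⟩ := polar (A * B)
  obtain ⟨K₂, hK₂u, hM₂⟩ := polar (B * C)
  set P₁ := msqrt ((A * B) * (A * B)ᴴ) with hP₁def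
  set P₂ := msqrt ((B * C) * (B * C)ᴴ) with hP₂def
  have hP₁ : P₁.PosSemidef := msqrt_posSemidef (posSemidef_self_mul_conjTranspose _)
  have hP₂ : P₂.PosSemidef := msqrt_posSemidef (posSemidef_self_mul_conjTranspose _)
  have t1 : (A * B) * K₁ᴴ = P₁ := by
    rw [hM₁, mul_assoc, unitary_mul_conjT hK₁u, mul_one]
  have t2 : (B * C) * K₂ᴴ = P₂ := by
    rw [hM₂, mul_assoc, unitary_mul_conjT hK₂u, mul_one]
  -- trace nonnegativity facts
  have hρ0 : 0 ≤ ρ.trace.re := trace_re_nonneg hρ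
  have hσ0 : 0 ≤ σ.trace.re := trace_re_nonneg hσ
  have hτ0 : 0 ≤ τ.trace.re := trace_re_nonneg hτ
  set sρ := Real.sqrt (1 - ρ.trace.re) with hsρdef
  set sσ := Real.sqrt (1 - σ.trace.re) with hsσdef
  set sτ := Real.sqrt (1 - τ.trace.re) with hsτdef
  have hsρ2 : sρ^2 = 1 - ρ.trace.re := Real.sq_sqrt (by linarith)
  have hsσ2 : sσ^2 = 1 - σ.trace.re := Real.sq_sqrt (by linarith)
  have hsτ2 : sτ^2 = 1 - τ.trace.re := Real.sq_sqrt (by linarith)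
  set x := emb (A * K₁) sρ with hxdef
  set y := emb B sσ with hydef
  set z := emb (C * K₂ᴴ) sτ with hzdef
  -- norms are 1
  have hxn : ‖x‖ = 1 := by
    rw [hxdef, norm_emb]
    have hc : (A * K₁)ᴴ * (A * K₁) = K₁ᴴ * ρ * K₁ := by
      rw [Matrix.conjTranspose_mul, hAH, ← hAA]; noncomm_ring
    have htr : (K₁ᴴ * ρ * K₁).trace = ρ.trace := by
      rw [Matrix.trace_mul_comm, ← mul_assoc, unitary_mul_conjT hK₁u, one_mul]
    rw [hc, htr, hsρ2]
    norm_num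
  have hyn : ‖y‖ = 1 := by
    rw [hydef, norm_emb, hBH, hBB, hsσ2]
    norm_num
  have hzn : ‖z‖ = 1 := by
    rw [hzdef, norm_emb]
    have hc : (C * K₂ᴴ)ᴴ * (C * K₂ᴴ) = K₂ * τ * K₂ᴴ := by
      rw [Matrix.conjTranspose_mul, hCH, Matrix.conjTranspose_conjTranspose, ← hCC]
      noncomm_ring
    have htr : (K₂ * τ * K₂ᴴ).trace = τ.trace := by
      rw [Matrix.trace_mul_comm, ← mul_assoc, unitary_conjT_mul hK₂u, one_mul]
    rw [hc, htr, hsτ2]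
    norm_num
  -- inner products
  have hP₁tr : P₁.trace = ((P₁.trace.re : ℝ) : ℂ) := trace_eq_re hP₁
  have hP₂tr : P₂.trace = ((P₂.trace.re : ℝ) : ℂ) := trace_eq_re hP₂
  set α := genFid ρ σ with hαdef
  set β := genFid σ τ with hβdef
  have hsρσ : Real.sqrt ((1 - ρ.trace.re) * (1 - σ.trace.re)) = sρ * sσ :=
    Real.sqrt_mul (by linarith) _
  have hsστ : Real.sqrt ((1 - σ.trace.re) * (1 - τ.trace.re)) = sσ * sτ :=
    Real.sqrt_mul (by linarith) _
  have hsρτ : Real.sqrt ((1 - ρ.trace.re) * (1 - τ.trace.re)) = sρ * sτ :=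
    Real.sqrt_mul (by linarith) _
  have hF₁ : fidelity ρ σ = P₁.trace.re := rfl
  have hF₂ : fidelity σ τ = P₂.trace.re := rfl
  have hxy : ⟪x, y⟫_ℂ = ((α : ℝ) : ℂ) := by
    rw [hxdef, hydef, inner_emb]
    have hc : (A * K₁)ᴴ * B = K₁ᴴ * (A * B) := by
      rw [Matrix.conjTranspose_mul, hAH]; noncomm_ring
    rw [hc, Matrix.trace_mul_comm, t1, hP₁tr, hαdef]
    rw [genFid, hsρσ, hF₁]
    push_cast
    ring
  have hyx : ⟪y, x⟫_ℂ = ((α : ℝ) : ℂ) := by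
    rw [← inner_conj_symm, hxy, Complex.conj_ofReal]
  have hyz : ⟪y, z⟫_ℂ = ((β : ℝ) : ℂ) := by
    rw [hydef, hzdef, inner_emb]
    have hc : Bᴴ * (C * K₂ᴴ) = (B * C) * K₂ᴴ := by
      rw [hBH]; noncomm_ring
    rw [hc, t2, hP₂tr, hβdef]
    rw [genFid, hsστ, hF₂]
    push_cast
    ring
  -- bound on re ⟪x, z⟫
  have hxz : (⟪x, z⟫_ℂ).re ≤ genFid ρ τ := by
    rw [hxdef, hzdef, inner_emb]
    have hc : (A * K₁)ᴴ * (C * K₂ᴴ) = K₁ᴴ * ((A * C) * K₂ᴴ) := by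
      rw [Matrix.conjTranspose_mul, hAH]; noncomm_ring
    have htr : (K₁ᴴ * ((A * C) * K₂ᴴ)).trace = ((A * C) * (K₂ᴴ * K₁ᴴ)).trace := by
      rw [Matrix.trace_mul_comm, mul_assoc]
    have hQu : (K₂ᴴ * K₁ᴴ) ∈ Matrix.unitaryGroup n ℂ :=
      mul_mem (unitary_conjT_mem hK₂u) (unitary_conjT_mem hK₁u)
    have hbd : (((A * C) * (K₂ᴴ * K₁ᴴ)).trace).re ≤ traceNorm (A * C) :=
      trace_mul_unitary_re_le _ _ hQu
    have hfid : traceNorm (A * C) = fidelity ρ τ := rfl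
    rw [hc]
    have : ((K₁ᴴ * ((A * C) * K₂ᴴ)).trace + ((sρ * sτ : ℝ) : ℂ)).re
        = ((A * C) * (K₂ᴴ * K₁ᴴ)).trace.re + sρ * sτ := by
      rw [htr]; simp
    rw [this, genFid, hsρτ, ← hfid]
    linarith
  -- α, β are in [0,1]
  have hP₁0 : 0 ≤ P₁.trace.re := trace_re_nonneg hP₁
  have hP₂0 : 0 ≤ P₂.trace.re := trace_re_nonneg hP₂
  have hα0 : 0 ≤ α := by
    have h := Real.sqrt_nonneg ((1 - ρ.trace.re) * (1 - σ.trace.re))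
    rw [hαdef, genFid, hF₁]
    linarith
  have hβ0 : 0 ≤ β := by
    have h := Real.sqrt_nonneg ((1 - σ.trace.re) * (1 - τ.trace.re))
    rw [hβdef, genFid, hF₂]
    linarith
  have hα1 : α ≤ 1 := by
    have h2 : ‖⟪x, y⟫_ℂ‖ ≤ ‖x‖ * ‖y‖ := norm_inner_le_norm _ _
    rw [hxy, hxn, hyn, mul_one] at h2
    have h3 : |α| ≤ 1 := by simpa [Real.norm_eq_abs] using h2
    linarith [le_abs_self α, (abs_le.mp h3).2]
  have hβ1 : β ≤ 1 := by
    have h2 : ‖⟪y, z⟫_ℂ‖ ≤ ‖y‖ * ‖z‖ := norm_inner_le_norm _ _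
    rw [hyz, hyn, hzn, mul_one] at h2
    have h3 : |β| ≤ 1 := by simpa [Real.norm_eq_abs] using h2
    linarith [le_abs_self β, (abs_le.mp h3).2]
  -- geometric bound
  have hgeo := geomG hxn hyn hzn hyx hyz
  have hkey : α * β - Real.sqrt (1 - α^2) * Real.sqrt (1 - β^2) ≤ genFid ρ τ :=
    le_trans hgeo hxz
  have := scalarS hα0 hα1 hβ0 hβ1 hkey
  simpa [pdist, hαdef, hβdef] using this
end
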